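/- (Second derivative bound for the eigenvalue.) Let d ≥ 1, λ > 0, M₁ ≥ 0, M₂ ≥ 0. Let H : ℝ → Matrix (Fin d) (Fin d) ℂ be twice differentiable on [0,1] with each H(s) Hermitian, ‖H'(s)‖ ≤ M₁ and ‖H''(s)‖ ≤ M₂ for all s ∈ [0,1]. Let Ψ : ℝ → EuclideanSpace ℂ (Fin d) be twice differentiable on [0,1] with ‖Ψ(s)‖ = 1 and ⟨Ψ'(s), Ψ(s)⟩ = 0 for all s ∈ [0,1], and let γ : ℝ → ℝ be twice differentiable on [0,1], such that H(s) Ψ(s) = γ(s) Ψ(s) for all s ∈ [0,1]. Assume that for every s ∈ [0,1] the eigenspace of H(s) for the eigenvalue γ(s) is one-dimensional (spanned by Ψ(s)) and every eigenvalue μ ≠ γ(s) of H(s) satisfies |μ − γ(s)| ≥ λ. Then for every s ∈ [0,1], |γ''(s)| ≤ M₂ + 4·M₁²/λ. -/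

import Mathlib

open scoped InnerProductSpace
open Matrix

/-- The continuous linear map on Euclidean space associated to a matrix;
its operator norm is the operator norm induced by the Euclidean norm. -/
noncomputable def opCLM {d : ℕ} (A : Matrix (Fin d) (Fin d) ℂ) :
    EuclideanSpace ℂ (Fin d) →L[ℂ] EuclideanSpace ℂ (Fin d) :=
  Matrix.toEuclideanCLM (𝕜 := ℂ) A

section aux
variable {d : ℕ}
local notation "E" => EuclideanSpace ℂ (Fin d)

lemma aux_clm_apply {A : ℝ → E →L[ℂ] E} {A' : E →L[ℂ] E} {u : ℝ → E} {u' : E} {x : ℝ}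
    (hA : HasDerivAt A A' x) (hu : HasDerivAt u u' x) :
    HasDerivAt (fun t => A t (u t)) (A' (u x) + A x u') x := by
  have h1 : HasDerivAt (fun t => (A t).restrictScalars ℝ) (A'.restrictScalars ℝ) x :=
    (ContinuousLinearMap.restrictScalarsL ℂ E E ℝ ℝ).hasFDerivAt.comp_hasDerivAt x hA
  exact h1.clm_apply hu

lemma aux_eigen (A : Matrix (Fin d) (Fin d) ℂ) (hA : A.IsHermitian) (j : Fin d) :
    opCLM A (hA.eigenvectorBasis j) = (hA.eigenvalues j : ℂ) • hA.eigenvectorBasis j := by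
  apply (WithLp.equiv 2 _).injective
  simp [opCLM, Matrix.toLin'_apply, hA.mulVec_eigenvectorBasis j]

lemma aux_sym (A : Matrix (Fin d) (Fin d) ℂ) (hA : A.IsHermitian) (x y : E) :
    ⟪opCLM A x, y⟫_ℂ = ⟪x, opCLM A y⟫_ℂ := by
  have := (Matrix.isHermitian_iff_isSymmetric.1 hA) x y
  simpa [opCLM, ← Matrix.coe_toEuclideanCLM_eq_toEuclideanLin] using this

lemma aux_norm_sq (b : OrthonormalBasis (Fin d) ℂ E) (x : E) :
    ‖x‖ ^ 2 = ∑ j, ‖⟪b j, x⟫_ℂ‖ ^ 2 := by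
  have h1 : ‖x‖ = ‖b.repr x‖ := (b.repr.norm_map x).symm
  rw [h1, EuclideanSpace.norm_eq, Real.sq_sqrt (by positivity)]
  exact Finset.sum_congr rfl fun j _ => by rw [b.repr_apply_apply]

lemma aux_ip (A : Matrix (Fin d) (Fin d) ℂ) (x y : E) :
    ‖⟪x, opCLM A y⟫_ℂ‖ ≤ ‖x‖ * (‖opCLM A‖ * ‖y‖) :=
  (norm_inner_le_norm _ _).trans
    (mul_le_mul_of_nonneg_left ((opCLM A).le_opNorm y) (norm_nonneg x))
end aux


/-- **Second derivative bound for the eigenvalue.** -/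
theorem eigenvalue_second_deriv_bound {d : ℕ} (hd : 1 ≤ d)
    (lam M₁ M₂ : ℝ) (hlam : 0 < lam) (hM₁ : 0 ≤ M₁) (hM₂ : 0 ≤ M₂)
    (H H' H'' : ℝ → Matrix (Fin d) (Fin d) ℂ)
    (hHd1 : ∀ s ∈ Set.Icc (0:ℝ) 1, HasDerivAt (fun t => opCLM (H t)) (opCLM (H' s)) s)
    (hHd2 : ∀ s ∈ Set.Icc (0:ℝ) 1, HasDerivAt (fun t => opCLM (H' t)) (opCLM (H'' s)) s)
    (hherm : ∀ s ∈ Set.Icc (0:ℝ) 1, (H s).IsHermitian)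
    (hM₁b : ∀ s ∈ Set.Icc (0:ℝ) 1, ‖opCLM (H' s)‖ ≤ M₁)
    (hM₂b : ∀ s ∈ Set.Icc (0:ℝ) 1, ‖opCLM (H'' s)‖ ≤ M₂)
    (Ψ Ψ' Ψ'' : ℝ → EuclideanSpace ℂ (Fin d))
    (hΨd1 : ∀ s ∈ Set.Icc (0:ℝ) 1, HasDerivAt Ψ (Ψ' s) s)
    (hΨd2 : ∀ s ∈ Set.Icc (0:ℝ) 1, HasDerivAt Ψ' (Ψ'' s) s)
    (hΨnorm : ∀ s ∈ Set.Icc (0:ℝ) 1, ‖Ψ s‖ = 1)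
    (hphase : ∀ s ∈ Set.Icc (0:ℝ) 1, ⟪Ψ' s, Ψ s⟫_ℂ = 0)
    (γ γ' γ'' : ℝ → ℝ)
    (hγd1 : ∀ s ∈ Set.Icc (0:ℝ) 1, HasDerivAt γ (γ' s) s)
    (hγd2 : ∀ s ∈ Set.Icc (0:ℝ) 1, HasDerivAt γ' (γ'' s) s)
    (heig : ∀ s ∈ Set.Icc (0:ℝ) 1, opCLM (H s) (Ψ s) = (γ s : ℂ) • Ψ s)
    (heigspace : ∀ s ∈ Set.Icc (0:ℝ) 1, ∀ v : EuclideanSpace ℂ (Fin d),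
      opCLM (H s) v = (γ s : ℂ) • v → ∃ c : ℂ, v = c • Ψ s)
    (hgap : ∀ s ∈ Set.Icc (0:ℝ) 1, ∀ (μ : ℂ) (v : EuclideanSpace ℂ (Fin d)), v ≠ 0 →
      opCLM (H s) v = μ • v → μ ≠ (γ s : ℂ) → lam ≤ ‖μ - (γ s : ℂ)‖) :
    ∀ s ∈ Set.Icc (0:ℝ) 1, |γ'' s| ≤ M₂ + 4 * M₁ ^ 2 / lam := by
  have hUD : ∀ s ∈ Set.Icc (0:ℝ) 1, UniqueDiffWithinAt ℝ (Set.Icc (0:ℝ) 1) s :=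
    fun s hs => (uniqueDiffOn_Icc one_pos) s hs
  have hΨΨ : ∀ s ∈ Set.Icc (0:ℝ) 1, ⟪Ψ s, Ψ s⟫_ℂ = 1 := by
    intro s hs
    rw [inner_self_eq_norm_sq_to_K, hΨnorm s hs]
    norm_num
  have hΨΨ' : ∀ s ∈ Set.Icc (0:ℝ) 1, ⟪Ψ s, Ψ' s⟫_ℂ = 0 := by
    intro s hs
    rw [← inner_conj_symm, hphase s hs, map_zero]
  -- cross terms vanish
  have hcross1 : ∀ s ∈ Set.Icc (0:ℝ) 1, ⟪Ψ' s, opCLM (H s) (Ψ s)⟫_ℂ = 0 := by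
    intro s hs
    rw [heig s hs, inner_smul_right, hphase s hs, mul_zero]
  have hcross2 : ∀ s ∈ Set.Icc (0:ℝ) 1, ⟪Ψ s, opCLM (H s) (Ψ' s)⟫_ℂ = 0 := by
    intro s hs
    rw [← aux_sym _ (hherm s hs), heig s hs, inner_smul_left, hΨΨ' s hs, mul_zero]
  -- first derivative identity
  have hγ'eq : ∀ s ∈ Set.Icc (0:ℝ) 1, (γ' s : ℂ) = ⟪Ψ s, opCLM (H' s) (Ψ s)⟫_ℂ := by
    intro s hs
    have hf : HasDerivAt (fun t => ⟪Ψ t, opCLM (H t) (Ψ t)⟫_ℂ)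
        (⟪Ψ s, opCLM (H' s) (Ψ s) + opCLM (H s) (Ψ' s)⟫_ℂ + ⟪Ψ' s, opCLM (H s) (Ψ s)⟫_ℂ) s :=
      HasDerivAt.inner ℂ (hΨd1 s hs) (aux_clm_apply (hHd1 s hs) (hΨd1 s hs))
    have hg : HasDerivAt (fun t => (γ t : ℂ)) (γ' s : ℂ) s := (hγd1 s hs).ofReal_comp
    have heqon : ∀ t ∈ Set.Icc (0:ℝ) 1,
        (fun t => (γ t : ℂ)) t = (fun t => ⟪Ψ t, opCLM (H t) (Ψ t)⟫_ℂ) t := by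
      intro t ht
      simp only [heig t ht, inner_smul_right, hΨΨ t ht, mul_one]
    have huniq := (hUD s hs).eq_deriv _
      (hf.hasDerivWithinAt.congr heqon (heqon s hs)) hg.hasDerivWithinAt
    rw [← huniq, inner_add_right, hcross1 s hs, hcross2 s hs, add_zero, add_zero]
  -- derivative of eigen-equation
  have heigd : ∀ s ∈ Set.Icc (0:ℝ) 1,
      opCLM (H' s) (Ψ s) + opCLM (H s) (Ψ' s) = (γ' s : ℂ) • Ψ s + (γ s : ℂ) • Ψ' s := by
    intro s hs
    have hf : HasDerivAt (fun t => opCLM (H t) (Ψ t))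
        (opCLM (H' s) (Ψ s) + opCLM (H s) (Ψ' s)) s :=
      aux_clm_apply (hHd1 s hs) (hΨd1 s hs)
    have hg : HasDerivAt (fun t => (γ t : ℂ) • Ψ t)
        ((γ s : ℂ) • Ψ' s + (γ' s : ℂ) • Ψ s) s :=
      HasDerivAt.smul (hγd1 s hs).ofReal_comp (hΨd1 s hs)
    have huniq := (hUD s hs).eq_deriv _ hf.hasDerivWithinAt
      (hg.hasDerivWithinAt.congr (fun t ht => heig t ht) (heig s hs))
    rw [huniq]; abel
  -- bound on |γ'|
  have hγ'bd : ∀ s ∈ Set.Icc (0:ℝ) 1, |γ' s| ≤ M₁ := by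
    intro s hs
    have h0 : |γ' s| = ‖(γ' s : ℂ)‖ := by rw [Complex.norm_real, Real.norm_eq_abs]
    rw [h0, hγ'eq s hs]
    calc ‖⟪Ψ s, opCLM (H' s) (Ψ s)⟫_ℂ‖ ≤ ‖Ψ s‖ * (‖opCLM (H' s)‖ * ‖Ψ s‖) := aux_ip _ _ _
      _ = ‖opCLM (H' s)‖ := by rw [hΨnorm s hs]; ring
      _ ≤ M₁ := hM₁b s hs
  -- bound on ‖Ψ'‖ via spectral gap
  have hΨ'bd : ∀ s ∈ Set.Icc (0:ℝ) 1, ‖Ψ' s‖ ≤ 2 * M₁ / lam := by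
    intro s hs
    set v := Ψ' s with hv
    set w := (γ' s : ℂ) • Ψ s - opCLM (H' s) (Ψ s) with hw
    have hweq : opCLM (H s) v - (γ s : ℂ) • v = w := by
      have h := heigd s hs
      have h2 : (γ' s : ℂ) • Ψ s =
          opCLM (H' s) (Ψ s) + opCLM (H s) (Ψ' s) - (γ s : ℂ) • Ψ' s := by
        rw [h]; abel
      rw [hw, hv, h2]; abel
    have hwbd : ‖w‖ ≤ 2 * M₁ := by
      calc ‖w‖ ≤ ‖(γ' s : ℂ) • Ψ s‖ + ‖opCLM (H' s) (Ψ s)‖ := norm_sub_le _ _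
        _ ≤ ‖(γ' s : ℂ)‖ * ‖Ψ s‖ + ‖opCLM (H' s)‖ * ‖Ψ s‖ := by
            rw [norm_smul]
            exact add_le_add le_rfl ((opCLM (H' s)).le_opNorm _)
        _ = ‖(γ' s : ℂ)‖ + ‖opCLM (H' s)‖ := by rw [hΨnorm s hs]; ring
        _ ≤ M₁ + M₁ := by
            refine add_le_add ?_ (hM₁b s hs)
            rw [Complex.norm_real, Real.norm_eq_abs]
            exact hγ'bd s hs
        _ = 2 * M₁ := by ring
    have hA := hherm s hs
    have hΨv : ⟪Ψ s, v⟫_ℂ = 0 := hΨΨ' s hs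
    have hcoef : ∀ j, ⟪hA.eigenvectorBasis j, w⟫_ℂ =
        ((hA.eigenvalues j : ℂ) - (γ s : ℂ)) * ⟪hA.eigenvectorBasis j, v⟫_ℂ := by
      intro j
      rw [← hweq, inner_sub_right, inner_smul_right, ← aux_sym _ hA, aux_eigen _ hA j,
        inner_smul_left, Complex.conj_ofReal]
      ring
    have hkey : ∀ j, lam * ‖⟪hA.eigenvectorBasis j, v⟫_ℂ‖ ≤ ‖⟪hA.eigenvectorBasis j, w⟫_ℂ‖ := by
      intro j
      by_cases hj : (hA.eigenvalues j : ℂ) = (γ s : ℂ)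
      · have hbj : opCLM (H s) (hA.eigenvectorBasis j) = (γ s : ℂ) • hA.eigenvectorBasis j := by
          rw [aux_eigen _ hA j, hj]
        obtain ⟨c, hc⟩ := heigspace s hs _ hbj
        have h0 : ⟪hA.eigenvectorBasis j, v⟫_ℂ = 0 := by
          rw [hc, inner_smul_left, hΨv, mul_zero]
        rw [hcoef j, h0]
        simp
      · have hne : hA.eigenvectorBasis j ≠ 0 :=
          (hA.eigenvectorBasis).orthonormal.ne_zero j
        have hgapj : lam ≤ ‖(hA.eigenvalues j : ℂ) - (γ s : ℂ)‖ :=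
          hgap s hs _ _ hne (aux_eigen _ hA j) hj
        rw [hcoef j, norm_mul]
        exact mul_le_mul_of_nonneg_right hgapj (norm_nonneg _)
    have hsum : (lam * ‖v‖) ^ 2 ≤ ‖w‖ ^ 2 := by
      rw [mul_pow, aux_norm_sq hA.eigenvectorBasis v, aux_norm_sq hA.eigenvectorBasis w,
        Finset.mul_sum]
      refine Finset.sum_le_sum fun j _ => ?_
      have h2 := mul_self_le_mul_self
        (mul_nonneg hlam.le (norm_nonneg _)) (hkey j)
      nlinarith [h2]
    have hvw : lam * ‖v‖ ≤ ‖w‖ := by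
      nlinarith [hsum, norm_nonneg w, mul_nonneg hlam.le (norm_nonneg v)]
    rw [le_div_iff₀ hlam]
    calc ‖v‖ * lam = lam * ‖v‖ := by ring
      _ ≤ ‖w‖ := hvw
      _ ≤ 2 * M₁ := hwbd
  -- second derivative identity and final bound
  intro s hs
  have hf : HasDerivAt (fun t => ⟪Ψ t, opCLM (H' t) (Ψ t)⟫_ℂ)
      (⟪Ψ s, opCLM (H'' s) (Ψ s) + opCLM (H' s) (Ψ' s)⟫_ℂ + ⟪Ψ' s, opCLM (H' s) (Ψ s)⟫_ℂ) s :=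
    HasDerivAt.inner ℂ (hΨd1 s hs) (aux_clm_apply (hHd2 s hs) (hΨd1 s hs))
  have hg : HasDerivAt (fun t => (γ' t : ℂ)) (γ'' s : ℂ) s := (hγd2 s hs).ofReal_comp
  have huniq := (hUD s hs).eq_deriv _
    (hf.hasDerivWithinAt.congr (fun t ht => (hγ'eq t ht)) (hγ'eq s hs)) hg.hasDerivWithinAt
  have habs : |γ'' s| = ‖(γ'' s : ℂ)‖ := by rw [Complex.norm_real, Real.norm_eq_abs]
  rw [habs, ← huniq]
  have hb1 : ‖⟪Ψ s, opCLM (H'' s) (Ψ s)⟫_ℂ‖ ≤ M₂ := by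
    calc ‖⟪Ψ s, opCLM (H'' s) (Ψ s)⟫_ℂ‖ ≤ ‖Ψ s‖ * (‖opCLM (H'' s)‖ * ‖Ψ s‖) := aux_ip _ _ _
      _ = ‖opCLM (H'' s)‖ := by rw [hΨnorm s hs]; ring
      _ ≤ M₂ := hM₂b s hs
  have hb2 : ‖⟪Ψ s, opCLM (H' s) (Ψ' s)⟫_ℂ‖ ≤ M₁ * (2 * M₁ / lam) := by
    calc ‖⟪Ψ s, opCLM (H' s) (Ψ' s)⟫_ℂ‖ ≤ ‖Ψ s‖ * (‖opCLM (H' s)‖ * ‖Ψ' s‖) := aux_ip _ _ _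
      _ = ‖opCLM (H' s)‖ * ‖Ψ' s‖ := by rw [hΨnorm s hs, one_mul]
      _ ≤ M₁ * (2 * M₁ / lam) :=
          mul_le_mul (hM₁b s hs) (hΨ'bd s hs) (norm_nonneg _) hM₁
  have hb3 : ‖⟪Ψ' s, opCLM (H' s) (Ψ s)⟫_ℂ‖ ≤ (2 * M₁ / lam) * M₁ := by
    calc ‖⟪Ψ' s, opCLM (H' s) (Ψ s)⟫_ℂ‖ ≤ ‖Ψ' s‖ * (‖opCLM (H' s)‖ * ‖Ψ s‖) := aux_ip _ _ _
      _ = ‖Ψ' s‖ * ‖opCLM (H' s)‖ := by rw [hΨnorm s hs, mul_one]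
      _ ≤ (2 * M₁ / lam) * M₁ :=
          mul_le_mul (hΨ'bd s hs) (hM₁b s hs) (norm_nonneg _) (by positivity)
  calc ‖⟪Ψ s, opCLM (H'' s) (Ψ s) + opCLM (H' s) (Ψ' s)⟫_ℂ + ⟪Ψ' s, opCLM (H' s) (Ψ s)⟫_ℂ‖
      ≤ ‖⟪Ψ s, opCLM (H'' s) (Ψ s) + opCLM (H' s) (Ψ' s)⟫_ℂ‖ + ‖⟪Ψ' s, opCLM (H' s) (Ψ s)⟫_ℂ‖ :=
        norm_add_le _ _
    _ ≤ (‖⟪Ψ s, opCLM (H'' s) (Ψ s)⟫_ℂ‖ + ‖⟪Ψ s, opCLM (H' s) (Ψ' s)⟫_ℂ‖) +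
        ‖⟪Ψ' s, opCLM (H' s) (Ψ s)⟫_ℂ‖ := by
        refine add_le_add ?_ le_rfl
        rw [inner_add_right]
        exact norm_add_le _ _
    _ ≤ (M₂ + M₁ * (2 * M₁ / lam)) + (2 * M₁ / lam) * M₁ :=
        add_le_add (add_le_add hb1 hb2) hb3
    _ = M₂ + 4 * M₁ ^ 2 / lam := by field_simp; ring
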